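/- Let X be a Banach space and (x_k), (y_k) Schauder basic sequences in X such that (x_k) admits an ℓ_1 spreading model while (y_k) does not admit an ℓ_1 spreading model. Then the difference sequence (x_k − y_k) admits an ℓ_1 spreading model. -/

import Mathlib

variable {X : Type*} [NormedAddCommGroup X] [NormedSpace ℝ X]

/-- `(e_k)` is a Schauder basic sequence. -/
def IsBasicSeq (e : ℕ → X) : Prop :=
  (∀ k, e k ≠ 0) ∧ ∃ C : ℝ, 1 ≤ C ∧ ∀ (m n : ℕ), m ≤ n → ∀ a : ℕ → ℝ,
    ‖∑ i ∈ Finset.range m, a i • e i‖ ≤ C * ‖∑ i ∈ Finset.range n, a i • e i‖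

/-- `(x_k)` generates an `ℓ₁` spreading model: there is `c > 0` so that for
every `n` and indices `n ≤ k_1 < ⋯ < k_n`,
`‖∑ a_i x_{k_i}‖ ≥ c ∑ |a_i|`. -/
def GeneratesL1SM (x : ℕ → X) : Prop :=
  ∃ c : ℝ, 0 < c ∧ ∀ (n : ℕ) (k : ℕ → ℕ), StrictMono k → n ≤ k 0 →
    ∀ a : ℕ → ℝ,
      c * ∑ i ∈ Finset.range n, |a i| ≤
        ‖∑ i ∈ Finset.range n, a i • x (k i)‖

/-- `(x_k)` admits an `ℓ₁` spreading model: some subsequence generates one. -/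
def AdmitsL1SM (x : ℕ → X) : Prop :=
  ∃ φ : ℕ → ℕ, StrictMono φ ∧ GeneratesL1SM (fun k => x (φ k))

namespace SubAdmits


lemma gens_comp {x : ℕ → X} {φ : ℕ → ℕ} (hφ : StrictMono φ) {c : ℝ} (hc : 0 < c)
    (h : ∀ (n : ℕ) (k : ℕ → ℕ), StrictMono k → n ≤ k 0 → ∀ a : ℕ → ℝ,
      c * ∑ i ∈ Finset.range n, |a i| ≤ ‖∑ i ∈ Finset.range n, a i • x (k i)‖) :
    ∀ (n : ℕ) (k : ℕ → ℕ), StrictMono k → n ≤ k 0 → ∀ a : ℕ → ℝ,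
      c * ∑ i ∈ Finset.range n, |a i| ≤ ‖∑ i ∈ Finset.range n, a i • x (φ (k i))‖ := by
  intro n k hk hk0 a
  exact h n (φ ∘ k) (hφ.comp hk) (le_trans hk0 (hφ.le_apply)) a

lemma admits_comp {x : ℕ → X} {φ : ℕ → ℕ} (hφ : StrictMono φ)
    (h : AdmitsL1SM (fun k => x (φ k))) : AdmitsL1SM x := by
  obtain ⟨ρ, hρ, hg⟩ := h
  exact ⟨φ ∘ ρ, hφ.comp hρ, hg⟩

lemma not_admits_comp {x : ℕ → X} {φ : ℕ → ℕ} (hφ : StrictMono φ)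
    (h : ¬ AdmitsL1SM x) : ¬ AdmitsL1SM (fun k => x (φ k)) :=
  fun hh => h (admits_comp hφ hh)

/-- extract a normalized small combination from failure to generate. -/
lemma small_combo {w : ℕ → X} (h : ¬ GeneratesL1SM w) {δ : ℝ} (hδ : 0 < δ) :
    ∃ (n : ℕ) (k : ℕ → ℕ) (a : ℕ → ℝ), StrictMono k ∧ n ≤ k 0 ∧
      (∑ i ∈ Finset.range n, |a i|) = 1 ∧
      ‖∑ i ∈ Finset.range n, a i • w (k i)‖ < δ := by
  simp only [GeneratesL1SM, not_exists, not_and, not_forall] at h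
  obtain ⟨n, k, hk, hk0, a, ha⟩ := h δ hδ
  rw [not_le] at ha
  have hs : 0 ≤ ∑ i ∈ Finset.range n, |a i| :=
    Finset.sum_nonneg fun i _ => abs_nonneg _
  have hspos : 0 < ∑ i ∈ Finset.range n, |a i| := by
    rcases hs.lt_or_eq with h' | h'
    · exact h'
    · exfalso
      rw [← h', mul_zero] at ha
      exact absurd (norm_nonneg _) (not_le.2 ha)
  set s := ∑ i ∈ Finset.range n, |a i| with hsdef
  refine ⟨n, k, fun i => s⁻¹ * a i, hk, hk0, ?_, ?_⟩
  · simp only [abs_mul, abs_inv, abs_of_pos hspos]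
    rw [← Finset.mul_sum, ← hsdef, inv_mul_cancel₀ hspos.ne']
  · have : ∑ i ∈ Finset.range n, (s⁻¹ * a i) • w (k i)
        = s⁻¹ • ∑ i ∈ Finset.range n, a i • w (k i) := by
      rw [Finset.smul_sum]
      exact Finset.sum_congr rfl fun i _ => by rw [mul_smul]
    rw [this, norm_smul, norm_inv, Real.norm_eq_abs, abs_of_pos hspos]
    calc s⁻¹ * ‖∑ i ∈ Finset.range n, a i • w (k i)‖ < s⁻¹ * (δ * s) := by
          exact mul_lt_mul_of_pos_left ha (inv_pos.2 hspos)
      _ = δ := by field_simp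

/-- coefficient functional bound for a basic sequence. -/
lemma coeff_bound {w : ℕ → X} {C : ℝ}
    (hC : ∀ (m n : ℕ), m ≤ n → ∀ a : ℕ → ℝ,
      ‖∑ i ∈ Finset.range m, a i • w i‖ ≤ C * ‖∑ i ∈ Finset.range n, a i • w i‖)
    (N : ℕ) (a : ℕ → ℝ) {j : ℕ} (hj : j < N) :
    |a j| * ‖w j‖ ≤ 2 * C * ‖∑ i ∈ Finset.range N, a i • w i‖ := by
  have hrepr : a j • w j = (∑ i ∈ Finset.range (j+1), a i • w i)
      - ∑ i ∈ Finset.range j, a i • w i := by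
    rw [Finset.sum_range_succ]; abel
  have h1 := hC (j+1) N hj a
  have h2 := hC j N (le_of_lt (Nat.lt_of_succ_le hj)) a
  calc |a j| * ‖w j‖ = ‖a j • w j‖ := by rw [norm_smul, Real.norm_eq_abs]
    _ ≤ ‖∑ i ∈ Finset.range (j+1), a i • w i‖ + ‖∑ i ∈ Finset.range j, a i • w i‖ := by
        rw [hrepr]; exact norm_sub_le _ _
    _ ≤ C * ‖∑ i ∈ Finset.range N, a i • w i‖ + C * ‖∑ i ∈ Finset.range N, a i • w i‖ :=
        add_le_add h1 h2
    _ = 2 * C * ‖∑ i ∈ Finset.range N, a i • w i‖ := by ring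

/-- represent a combination along a strictly monotone index map as a full-range combination. -/
lemma repr_subseq (w : ℕ → X) (a : ℕ → ℝ) (n : ℕ) (u : ℕ → ℕ) (hu : StrictMono u) :
    ∃ (a' : ℕ → ℝ) (N : ℕ), (∀ i < n, a' (u i) = a i) ∧ (∀ i < n, u i < N) ∧
      ∑ t ∈ Finset.range N, a' t • w t = ∑ i ∈ Finset.range n, a i • w (u i) := by
  classical
  refine ⟨fun t => ∑ i ∈ Finset.range n, if u i = t then a i else 0, u n + 1, ?_, ?_, ?_⟩
  · intro i hi
    simp only []
    rw [Finset.sum_eq_single i]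
    · simp
    · intro j hj hne
      simp only [ite_eq_right_iff]
      intro huj
      exact absurd (hu.injective huj) hne
    · intro h; exact absurd (Finset.mem_range.2 hi) h
  · intro i hi
    exact Nat.lt_succ_of_le (hu.monotone (le_of_lt hi))
  · simp only [Finset.sum_smul, ite_smul, zero_smul]
    rw [Finset.sum_comm]
    refine Finset.sum_congr rfl fun i hi => ?_
    rw [Finset.sum_ite_eq (Finset.range (u n + 1)) (u i) (fun t => a i • w t)]
    simp [Nat.lt_succ_of_le (hu.monotone (le_of_lt (Finset.mem_range.1 hi)))]


lemma geom_bound {q : ℕ → ℕ} (hq : StrictMono q) (n : ℕ) :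
    ∑ i ∈ Finset.range n, ((1:ℝ)/2) ^ (q i) ≤ 2 := by
  have h1 : ∀ i, ((1:ℝ)/2) ^ (q i) ≤ ((1:ℝ)/2) ^ i := fun i =>
    pow_le_pow_of_le_one (by norm_num) (by norm_num) hq.le_apply
  calc ∑ i ∈ Finset.range n, ((1:ℝ)/2) ^ (q i)
      ≤ ∑ i ∈ Finset.range n, ((1:ℝ)/2) ^ i :=
        Finset.sum_le_sum fun i _ => h1 i
    _ = (((1:ℝ)/2) ^ n - 1) / ((1:ℝ)/2 - 1) := geom_sum_eq (by norm_num) n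
    _ ≤ 2 := by
        rw [div_le_iff_of_neg (by norm_num : (1:ℝ)/2 - 1 < 0)]
        have : (0:ℝ) ≤ ((1:ℝ)/2)^n := by positivity
        nlinarith

/-- a strictly monotone enumeration inside a family of "eventually available" sets. -/
lemma exists_strictMono_into (S : ℕ → Set ℕ) (hS : ∀ k, (S k).Infinite) :
    ∃ φ : ℕ → ℕ, StrictMono φ ∧ ∀ k, φ k ∈ S k := by
  have hstep : ∀ (k : ℕ) (p : ℕ), ∃ b ∈ S k, p < b := fun k p => (hS k).exists_gt p
  classical
  let F : ℕ → ℕ := fun k => Nat.rec (Classical.choose (hstep 0 0))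
    (fun k prev => Classical.choose (hstep (k+1) prev)) k
  have hF0 : F 0 ∈ S 0 := (Classical.choose_spec (hstep 0 0)).1
  have hFs : ∀ k, F (k+1) ∈ S (k+1) ∧ F k < F (k+1) := by
    intro k
    have := Classical.choose_spec (hstep (k+1) (F k))
    exact ⟨this.1, this.2⟩
  refine ⟨F, strictMono_nat_of_lt_succ fun k => (hFs k).2, ?_⟩
  intro k
  cases k with
  | zero => exact hF0
  | succ k => exact (hFs k).1


/-- growth lemma: fast-growing basic subsequence minus a bounded sequence generates ℓ¹ SM. -/
lemma growth {w v : ℕ → X} {C M : ℝ} (hC1 : 1 ≤ C) (hM : 0 ≤ M)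
    (hC : ∀ (m n : ℕ), m ≤ n → ∀ a : ℕ → ℝ,
      ‖∑ i ∈ Finset.range m, a i • w i‖ ≤ C * ‖∑ i ∈ Finset.range n, a i • w i‖)
    {φ : ℕ → ℕ} (hv : ∀ k, ‖v (φ k)‖ ≤ M) (hφ : StrictMono φ)
    (hgrow : ∀ k, 4*C*(M+1) * 2^k ≤ ‖w (φ k)‖) :
    GeneratesL1SM (fun k => w (φ k) - v (φ k)) := by
  refine ⟨1, one_pos, ?_⟩
  intro n q hq _ a
  set u : ℕ → ℕ := φ ∘ q with hu_def
  have hu : StrictMono u := hφ.comp hq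
  obtain ⟨a', N, ha'1, ha'2, ha'3⟩ := repr_subseq w a n u hu
  set Sw := ∑ i ∈ Finset.range n, a i • w (u i) with hSw
  set s := ∑ i ∈ Finset.range n, |a i| with hs
  have hs0 : 0 ≤ s := Finset.sum_nonneg fun i _ => abs_nonneg _
  have hSw0 : 0 ≤ ‖Sw‖ := norm_nonneg _
  have hCpos : (0:ℝ) < C := lt_of_lt_of_le one_pos hC1
  -- coefficient bound
  have key : ∀ i ∈ Finset.range n, |a i| * (4*C*(M+1)) ≤
      (2 * C * ‖Sw‖) * ((1:ℝ)/2) ^ (q i) := by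
    intro i hi
    have hiN : u i < N := ha'2 i (Finset.mem_range.1 hi)
    have h1 : |a i| * ‖w (u i)‖ ≤ 2 * C * ‖Sw‖ := by
      have := coeff_bound hC N a' hiN
      rwa [ha'1 i (Finset.mem_range.1 hi), ha'3] at this
    have h2 : |a i| * (4*C*(M+1) * 2^(q i)) ≤ 2 * C * ‖Sw‖ := by
      refine le_trans ?_ h1
      exact mul_le_mul_of_nonneg_left (hgrow (q i)) (abs_nonneg _)
    have h3 : (0:ℝ) < 2 ^ (q i) := by positivity
    have := mul_le_mul_of_nonneg_right h2 (le_of_lt (by positivity : (0:ℝ) < ((1:ℝ)/2)^(q i)))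
    have e : (2:ℝ)^(q i) * ((1:ℝ)/2)^(q i) = 1 := by
      rw [one_div, inv_pow, mul_inv_cancel₀ (ne_of_gt h3)]
    calc |a i| * (4*C*(M+1)) = |a i| * (4*C*(M+1) * 2^(q i)) * ((1:ℝ)/2)^(q i) := by
          linear_combination (|a i| * (4*C*(M+1))) * e.symm
      _ ≤ (2 * C * ‖Sw‖) * ((1:ℝ)/2) ^ (q i) := this
  have sum_key : s * (4*C*(M+1)) ≤ (2*C*‖Sw‖) * 2 := by
    calc s * (4*C*(M+1)) = ∑ i ∈ Finset.range n, |a i| * (4*C*(M+1)) := by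
          rw [Finset.sum_mul]
      _ ≤ ∑ i ∈ Finset.range n, (2 * C * ‖Sw‖) * ((1:ℝ)/2) ^ (q i) :=
          Finset.sum_le_sum key
      _ = (2*C*‖Sw‖) * ∑ i ∈ Finset.range n, ((1:ℝ)/2) ^ (q i) := by
          rw [Finset.mul_sum]
      _ ≤ (2*C*‖Sw‖) * 2 :=
          mul_le_mul_of_nonneg_left (geom_bound hq n) (by positivity)
  have main : (M+1) * s ≤ ‖Sw‖ := by nlinarith
  -- v part
  have hv_bound : ‖∑ i ∈ Finset.range n, a i • v (u i)‖ ≤ M * s := by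
    calc ‖∑ i ∈ Finset.range n, a i • v (u i)‖
        ≤ ∑ i ∈ Finset.range n, ‖a i • v (u i)‖ := norm_sum_le _ _
      _ ≤ ∑ i ∈ Finset.range n, |a i| * M := by
          refine Finset.sum_le_sum fun i _ => ?_
          rw [norm_smul, Real.norm_eq_abs]
          exact mul_le_mul_of_nonneg_left (hv (q i)) (abs_nonneg _)
      _ = M * s := by rw [hs, ← Finset.sum_mul, mul_comm]
  have split : ∑ i ∈ Finset.range n, a i • (w (φ (q i)) - v (φ (q i)))
      = Sw - ∑ i ∈ Finset.range n, a i • v (u i) := by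
    rw [hSw, ← Finset.sum_sub_distrib]
    exact Finset.sum_congr rfl fun i _ => by rw [smul_sub]; rfl
  rw [one_mul]
  calc s = (M+1) * s - M * s := by ring
    _ ≤ ‖Sw‖ - ‖∑ i ∈ Finset.range n, a i • v (u i)‖ :=
        sub_le_sub main hv_bound
    _ ≤ ‖Sw - ∑ i ∈ Finset.range n, a i • v (u i)‖ :=
        norm_sub_norm_le _ _
    _ = _ := by rw [← split]

theorem ramsey_tuples : ∀ (r : ℕ) {κ : Type} [Fintype κ] [Nonempty κ]
    (c : (Fin r → ℕ) → κ) (S : Set ℕ), S.Infinite →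
    ∃ T, T ⊆ S ∧ T.Infinite ∧ ∃ k₀, ∀ q : Fin r → ℕ,
      StrictMono q → (∀ i, q i ∈ T) → c q = k₀ := by
  intro r
  induction r with
  | zero =>
    intro κ _ _ c S hS
    refine ⟨S, le_refl _, hS, c (fun i => i.elim0), ?_⟩
    intro q _ _
    congr 1
    exact Subsingleton.elim _ _
  | succ r ih =>
    intro κ _F _N c S hS
    -- one-step lemma
    have step : ∀ (A : Set ℕ), A.Infinite → ∃ (a : ℕ) (B : Set ℕ) (k : κ),
        B ⊆ A ∧ B.Infinite ∧ a ∈ A ∧ (∀ b ∈ B, a < b) ∧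
        (∀ q : Fin r → ℕ, StrictMono q → (∀ i, q i ∈ B) → c (Fin.cons a q) = k) := by
      intro A hA
      obtain ⟨a, haA, _⟩ := hA.exists_gt 0
      have hA' : (A \ Set.Iic a).Infinite := hA.diff (Set.finite_Iic a)
      obtain ⟨T', hT'sub, hT'inf, k, hk⟩ := ih (fun q => c (Fin.cons a q)) _ hA'
      refine ⟨a, T', k, fun b hb => ((hT'sub hb).1), hT'inf, haA, ?_, hk⟩
      intro b hb
      have := (hT'sub hb).2
      simpa using this
    choose fa fB fk hsub hinf hmem hlt hmono using step
    classical
    let chain : ℕ → {A : Set ℕ // A.Infinite} := fun i =>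
      Nat.rec ⟨S, hS⟩ (fun _ prev => ⟨fB prev.1 prev.2, hinf prev.1 prev.2⟩) i
    have chain_succ : ∀ i, (chain (i+1)).1 = fB (chain i).1 (chain i).2 := fun i => rfl
    set a : ℕ → ℕ := fun i => fa (chain i).1 (chain i).2 with ha_def
    set kk : ℕ → κ := fun i => fk (chain i).1 (chain i).2 with hkk_def
    have hchain_sub : ∀ i, (chain (i+1)).1 ⊆ (chain i).1 := by
      intro i; rw [chain_succ]; exact hsub _ _
    have hchain_le : ∀ i j, i ≤ j → (chain j).1 ⊆ (chain i).1 := by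
      intro i j hij
      induction j with
      | zero => simp_all
      | succ j ihj =>
        rcases Nat.lt_or_ge i (j+1) with h | h
        · exact le_trans (hchain_sub j) (ihj (Nat.lt_succ_iff.1 h))
        · have : i = j + 1 := le_antisymm hij h
          subst this; exact le_refl _
    have ha_mem : ∀ i, a i ∈ (chain i).1 := fun i => hmem _ _
    have ha_lt : ∀ i, ∀ b ∈ (chain (i+1)).1, a i < b := by
      intro i; rw [chain_succ]; exact hlt _ _
    have ha_sm : StrictMono a := by
      apply strictMono_nat_of_lt_succ
      intro i
      exact ha_lt i _ (ha_mem (i+1))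
    -- pigeonhole on colors
    obtain ⟨k₀, hk₀⟩ := Finite.exists_infinite_fiber kk
    have hI : (kk ⁻¹' {k₀}).Infinite := Set.infinite_coe_iff.1 hk₀
    refine ⟨a '' (kk ⁻¹' {k₀}), ?_, hI.image (ha_sm.injective.injOn), k₀, ?_⟩
    · rintro _ ⟨i, _, rfl⟩
      exact hchain_le 0 i (Nat.zero_le i) (ha_mem i)
    · intro q hq hqT
      obtain ⟨i₀, hi₀, hqi₀⟩ := hqT 0
      have tail_mem : ∀ j : Fin r, Fin.tail q j ∈ (chain (i₀+1)).1 := by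
        intro j
        obtain ⟨i, _, hqi⟩ := hqT j.succ
        have : a i₀ < a i := by
          rw [hqi₀, hqi]
          exact hq (Fin.succ_pos j)
        have hii : i₀ < i := ha_sm.lt_iff_lt.1 this
        rw [Fin.tail, ← hqi]
        exact hchain_le (i₀+1) i hii (ha_mem i)
      have tail_sm : StrictMono (Fin.tail q) := by
        intro j j' hjj'
        exact hq (by simpa using hjj')
      have : c (Fin.cons (a i₀) (Fin.tail q)) = kk i₀ := by
        have := hmono (chain i₀).1 (chain i₀).2 (Fin.tail q) tail_sm ?_
        · rw [chain_succ] at tail_mem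
          exact this
        · intro j
          have := tail_mem j
          rw [chain_succ] at this
          exact this
      rw [hqi₀, Fin.cons_self_tail] at this
      rw [this]
      simpa using hi₀

lemma stab_one (r : ℕ) (g : (Fin r → ℕ) → ℝ) (B ε : ℝ) (hε : 0 < ε)
    (hg : ∀ v, 0 ≤ g v ∧ g v ≤ B) (S : Set ℕ) (hS : S.Infinite) :
    ∃ T, T ⊆ S ∧ T.Infinite ∧ ∀ v v' : Fin r → ℕ, StrictMono v → StrictMono v' →
      (∀ i, v i ∈ T) → (∀ i, v' i ∈ T) → |g v - g v'| ≤ ε := by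
  classical
  set h : (Fin r → ℕ) → ℝ := fun v => g v / ε with hh
  have hh0 : ∀ v, 0 ≤ h v := fun v => div_nonneg (hg v).1 hε.le
  have hhB : ∀ v, h v ≤ B / ε := fun v => (div_le_div_iff_of_pos_right hε).mpr (hg v).2
  set c : (Fin r → ℕ) → Fin (⌊B/ε⌋₊ + 1) := fun v =>
    ⟨⌊h v⌋₊, Nat.lt_succ_of_le (Nat.floor_le_floor (hhB v))⟩ with hc
  obtain ⟨T, hTS, hTinf, k₀, hk₀⟩ := ramsey_tuples r c S hS
  refine ⟨T, hTS, hTinf, ?_⟩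
  intro v v' hv hv' hvT hv'T
  have e : ⌊h v⌋₊ = ⌊h v'⌋₊ := by
    have e1 := hk₀ v hv hvT
    have e2 := hk₀ v' hv' hv'T
    have := e1.trans e2.symm
    exact congrArg Fin.val this
  have a1 : (⌊h v⌋₊ : ℝ) ≤ h v := Nat.floor_le (hh0 v)
  have a2 : h v < ⌊h v⌋₊ + 1 := Nat.lt_floor_add_one _
  have b1 : (⌊h v'⌋₊ : ℝ) ≤ h v' := Nat.floor_le (hh0 v')
  have b2 : h v' < ⌊h v'⌋₊ + 1 := Nat.lt_floor_add_one _
  have ecast : ((⌊h v⌋₊ : ℕ) : ℝ) = ((⌊h v'⌋₊ : ℕ) : ℝ) := by rw [e]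
  have habs : |h v - h v'| ≤ 1 := by
    rw [abs_sub_le_iff]
    constructor <;> linarith
  have hgv : g v = h v * ε := by rw [hh]; field_simp
  have hgv' : g v' = h v' * ε := by rw [hh]; field_simp
  calc |g v - g v'| = |h v - h v'| * ε := by
        rw [hgv, hgv', ← sub_mul, abs_mul, abs_of_pos hε]
    _ ≤ 1 * ε := mul_le_mul_of_nonneg_right habs hε.le
    _ = ε := one_mul ε

lemma stab_list (r : ℕ) (gs : List ((Fin r → ℕ) → ℝ)) (B ε : ℝ) (hε : 0 < ε)
    (hg : ∀ g ∈ gs, ∀ v, 0 ≤ g v ∧ g v ≤ B) (S : Set ℕ) (hS : S.Infinite) :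
    ∃ T, T ⊆ S ∧ T.Infinite ∧ ∀ g ∈ gs, ∀ v v' : Fin r → ℕ, StrictMono v → StrictMono v' →
      (∀ i, v i ∈ T) → (∀ i, v' i ∈ T) → |g v - g v'| ≤ ε := by
  induction gs generalizing S with
  | nil => exact ⟨S, le_refl _, hS, by simp⟩
  | cons g gs ih =>
    obtain ⟨T1, hT1S, hT1inf, hT1⟩ := stab_one r g B ε hε
      (hg g List.mem_cons_self) S hS
    obtain ⟨T, hTT1, hTinf, hT⟩ := ih (fun g' hg' => hg g' (List.mem_cons_of_mem _ hg')) T1 hT1inf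
    refine ⟨T, le_trans hTT1 hT1S, hTinf, ?_⟩
    intro g' hg' v v' hv hv' hvT hv'T
    rcases List.mem_cons.1 hg' with h | h
    · subst h
      exact hT1 v v' hv hv' (fun i => hTT1 (hvT i)) (fun i => hTT1 (hv'T i))
    · exact hT g' h v v' hv hv' hvT hv'T

lemma exists_stab (w₁ w₂ : ℕ → X) (B : ℝ) (hB0 : 0 ≤ B)
    (hB1 : ∀ k, ‖w₁ k‖ ≤ B) (hB2 : ∀ k, ‖w₂ k‖ ≤ B) (ε : ℝ) (hε : 0 < ε) :
    ∃ ψ : ℕ → ℕ, StrictMono ψ ∧ ∀ (n : ℕ) (a : ℕ → ℝ), (∑ i ∈ Finset.range n, |a i|) ≤ 1 →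
      ∀ q q' : ℕ → ℕ, StrictMono q → StrictMono q' → n ≤ q 0 → n ≤ q' 0 →
        |‖∑ i ∈ Finset.range n, a i • w₁ (ψ (q i))‖ -
          ‖∑ i ∈ Finset.range n, a i • w₁ (ψ (q' i))‖| ≤ ε ∧
        |‖∑ i ∈ Finset.range n, a i • w₂ (ψ (q i))‖ -
          ‖∑ i ∈ Finset.range n, a i • w₂ (ψ (q' i))‖| ≤ ε := by
  classical
  set K : ℕ → ℕ := fun n => ⌈3*(n+1)*(B+1)/ε⌉₊ + 1 with hK
  have hKpos : ∀ n, (0:ℝ) < (K n : ℝ) := by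
    intro n
    have : (0:ℕ) < K n := Nat.succ_pos _
    exact_mod_cast this
  have hKge : ∀ n, 3*(n+1)*(B+1)/ε ≤ (K n : ℝ) := by
    intro n
    calc 3*(n+1)*(B+1)/ε ≤ (⌈3*(n+1)*(B+1)/ε⌉₊ : ℝ) := Nat.le_ceil _
      _ ≤ (K n : ℝ) := by rw [hK]; push_cast; linarith
  set Net : (n : ℕ) → Finset (Fin n → ℤ) :=
    fun n => Fintype.piFinset (fun _ => Finset.Icc (-(K n : ℤ)) (K n)) with hNet
  set mkg : (n : ℕ) → (ℕ → X) → (Fin n → ℤ) → ((Fin n → ℕ) → ℝ) :=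
    fun n w z v => ‖∑ i : Fin n, ((z i : ℝ)/(K n : ℝ)) • w (v i)‖ with hmkg
  set gs : (n : ℕ) → List ((Fin n → ℕ) → ℝ) :=
    fun n => ((Net n).toList.map (mkg n w₁)) ++ ((Net n).toList.map (mkg n w₂)) with hgs
  -- bound on the g's
  have hmkg_bound : ∀ (n : ℕ) (w : ℕ → X), (∀ k, ‖w k‖ ≤ B) → ∀ z ∈ Net n, ∀ v,
      0 ≤ mkg n w z v ∧ mkg n w z v ≤ n * B := by
    intro n w hw z hz v
    refine ⟨norm_nonneg _, ?_⟩
    have hzi : ∀ i : Fin n, |(z i : ℝ)| ≤ (K n : ℝ) := by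
      intro i
      rw [hNet, Fintype.mem_piFinset] at hz
      have := hz i
      rw [Finset.mem_Icc] at this
      rw [abs_le]
      exact_mod_cast this
    calc ‖∑ i : Fin n, ((z i : ℝ)/(K n : ℝ)) • w (v i)‖
        ≤ ∑ i : Fin n, ‖((z i : ℝ)/(K n : ℝ)) • w (v i)‖ := norm_sum_le _ _
      _ ≤ ∑ i : Fin n, 1 * B := by
          refine Finset.sum_le_sum fun i _ => ?_
          rw [norm_smul, Real.norm_eq_abs, abs_div, abs_of_pos (hKpos n)]
          have h1 : |(z i : ℝ)| / (K n : ℝ) ≤ 1 := by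
            rw [div_le_one (hKpos n)]; exact hzi i
          exact mul_le_mul h1 (hw (v i)) (norm_nonneg _) one_pos.le
      _ = n * B := by simp [Finset.sum_const, Finset.card_univ]
  have hgs_bound : ∀ n, ∀ g ∈ gs n, ∀ v, 0 ≤ g v ∧ g v ≤ n * B := by
    intro n g hg v
    rw [hgs, List.mem_append] at hg
    rcases hg with hg | hg <;>
    · obtain ⟨z, hz, rfl⟩ := List.mem_map.1 hg
      exact hmkg_bound n _ (by assumption) z (Finset.mem_toList.1 hz) v
  -- the chain of stabilized infinite sets
  have task : ∀ (n : ℕ) (A : Set ℕ), A.Infinite → ∃ T, T ⊆ A ∧ T.Infinite ∧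
      (∀ g ∈ gs n, ∀ v v' : Fin n → ℕ, StrictMono v → StrictMono v' →
        (∀ i, v i ∈ T) → (∀ i, v' i ∈ T) → |g v - g v'| ≤ ε/3) :=
    fun n A hA => stab_list n (gs n) (n*B) (ε/3) (by positivity) (hgs_bound n) A hA
  choose fT hsub hinf hstab using task
  let chain : ℕ → {A : Set ℕ // A.Infinite} := fun n =>
    Nat.rec ⟨Set.univ, Set.infinite_univ⟩
      (fun n prev => ⟨fT n prev.1 prev.2, hinf n prev.1 prev.2⟩) n
  have chain_succ_sub : ∀ n, (chain (n+1)).1 ⊆ (chain n).1 := fun n => hsub n _ _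
  have chain_le : ∀ i j, i ≤ j → (chain j).1 ⊆ (chain i).1 := by
    intro i j hij
    induction j with
    | zero => simp_all
    | succ j ihj =>
      rcases Nat.lt_or_ge i (j+1) with h | h
      · exact le_trans (chain_succ_sub j) (ihj (Nat.lt_succ_iff.1 h))
      · have : i = j + 1 := le_antisymm hij h
        subst this; exact le_refl _
  have chain_stab : ∀ n, ∀ g ∈ gs n, ∀ v v' : Fin n → ℕ, StrictMono v → StrictMono v' →
      (∀ i, v i ∈ (chain (n+1)).1) → (∀ i, v' i ∈ (chain (n+1)).1) → |g v - g v'| ≤ ε/3 :=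
    fun n => hstab n _ _
  obtain ⟨ψ, hψ, hψmem⟩ := exists_strictMono_into (fun k => (chain (k+1)).1)
    (fun k => (chain (k+1)).2)
  refine ⟨ψ, hψ, ?_⟩
  intro n a ha q q' hq hq' hq0 hq'0
  have hmemq : ∀ u : ℕ → ℕ, StrictMono u → n ≤ u 0 → ∀ i : Fin n,
      ψ (u (i:ℕ)) ∈ (chain (n+1)).1 := by
    intro u hu hu0 i
    have h1 : n ≤ u (i:ℕ) := le_trans hu0 (hu.monotone (Nat.zero_le _))
    exact chain_le (n+1) (u (i:ℕ) + 1) (by omega) (hψmem (u (i:ℕ)))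
  have hai : ∀ i ∈ Finset.range n, |a i| ≤ 1 :=
    fun i hi => le_trans (Finset.single_le_sum (fun j _ => abs_nonneg (a j)) hi) ha
  -- rounding
  set z : Fin n → ℤ := fun i => ⌊a (i:ℕ) * (K n : ℝ)⌋ with hz
  have hz1 : ∀ i : Fin n, |a (i:ℕ)| ≤ 1 := fun i => hai _ (Finset.mem_range.2 i.2)
  have hzmem : z ∈ Net n := by
    rw [hNet, Fintype.mem_piFinset]
    intro i
    rw [Finset.mem_Icc]
    have h1 := abs_le.1 (hz1 i)
    constructor
    · have h2 : (-(K n : ℝ)) ≤ a (i:ℕ) * (K n : ℝ) := by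
        have := mul_le_mul_of_nonneg_right h1.1 (hKpos n).le
        linarith
      have h3 : (-(K n : ℤ) : ℤ) = ⌊(-(K n : ℝ) : ℝ)⌋ := by
        rw [show (-(K n : ℝ) : ℝ) = ((-(K n : ℤ) : ℤ) : ℝ) by push_cast; ring,
          Int.floor_intCast]
      rw [hz, h3]
      exact Int.floor_mono h2
    · have hcast : (((K n : ℤ) : ℤ) : ℝ) = ((K n : ℕ) : ℝ) := by push_cast; ring
      have h2 : a (i:ℕ) * (K n : ℝ) ≤ (((K n : ℤ) : ℤ) : ℝ) := by
        rw [hcast]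
        have := mul_le_mul_of_nonneg_right h1.2 (hKpos n).le
        linarith
      have h3 : z i ≤ ⌊(((K n : ℤ) : ℤ) : ℝ)⌋ := Int.floor_mono h2
      rwa [Int.floor_intCast] at h3
  have herr : ∀ i : Fin n, |a (i:ℕ) - (z i : ℝ)/(K n : ℝ)| ≤ 1/(K n : ℝ) := by
    intro i
    have h1 : (z i : ℝ) ≤ a (i:ℕ) * (K n : ℝ) := Int.floor_le _
    have h2 : a (i:ℕ) * (K n : ℝ) < (z i : ℝ) + 1 := Int.lt_floor_add_one _
    have h5 : (0:ℝ) < 1/(K n : ℝ) := by positivity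
    have h3 : 0 ≤ a (i:ℕ) - (z i : ℝ)/(K n : ℝ) := by
      rw [sub_nonneg, div_le_iff₀ (hKpos n)]
      exact h1
    have h4 : a (i:ℕ) - (z i : ℝ)/(K n : ℝ) ≤ 1/(K n : ℝ) := by
      rw [sub_le_iff_le_add, ← add_div, le_div_iff₀ (hKpos n)]
      linarith
    exact abs_le.2 ⟨by linarith, h4⟩
  -- approximation
  have approx : ∀ (w : ℕ → X), (∀ k, ‖w k‖ ≤ B) → ∀ (u : ℕ → ℕ),
      |‖∑ i ∈ Finset.range n, a i • w (ψ (u i))‖ -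
        mkg n w z (fun i => ψ (u (i:ℕ)))| ≤ ε/3 := by
    intro w hw u
    have e1 : ∑ i ∈ Finset.range n, a i • w (ψ (u i))
        = ∑ i : Fin n, a (i:ℕ) • w (ψ (u (i:ℕ))) :=
      (Fin.sum_univ_eq_sum_range (fun i => a i • w (ψ (u i))) n).symm
    rw [hmkg, e1]
    calc |‖∑ i : Fin n, a (i:ℕ) • w (ψ (u (i:ℕ)))‖ -
          ‖∑ i : Fin n, ((z i : ℝ)/(K n : ℝ)) • w (ψ (u (i:ℕ)))‖|
        ≤ ‖(∑ i : Fin n, a (i:ℕ) • w (ψ (u (i:ℕ)))) -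
            ∑ i : Fin n, ((z i : ℝ)/(K n : ℝ)) • w (ψ (u (i:ℕ)))‖ :=
          abs_norm_sub_norm_le _ _
      _ = ‖∑ i : Fin n, (a (i:ℕ) - (z i : ℝ)/(K n : ℝ)) • w (ψ (u (i:ℕ)))‖ := by
          rw [← Finset.sum_sub_distrib]
          congr 1
          exact Finset.sum_congr rfl fun i _ => by rw [sub_smul]
      _ ≤ ∑ i : Fin n, ‖(a (i:ℕ) - (z i : ℝ)/(K n : ℝ)) • w (ψ (u (i:ℕ)))‖ :=
          norm_sum_le _ _
      _ ≤ ∑ i : Fin n, (1/(K n : ℝ)) * B := by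
          refine Finset.sum_le_sum fun i _ => ?_
          rw [norm_smul, Real.norm_eq_abs]
          exact mul_le_mul (herr i) (hw _) (norm_nonneg _) (by positivity)
      _ = n * ((1/(K n : ℝ)) * B) := by simp [Finset.sum_const, Finset.card_univ]
      _ ≤ ε/3 := by
          have h1 := hKge n
          have h2 : 3*((n:ℝ)+1)*(B+1) ≤ (K n : ℝ) * ε := by
            rw [div_le_iff₀ hε] at h1
            exact h1
          rw [one_div_mul_eq_div, ← mul_div_assoc, div_le_iff₀ (hKpos n)]
          nlinarith [hB0, (Nat.cast_nonneg n : (0:ℝ) ≤ (n:ℝ))]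
  -- stabilized comparison for the net vector
  have main : ∀ (w : ℕ → X), (∀ k, ‖w k‖ ≤ B) → mkg n w z ∈ gs n →
      |‖∑ i ∈ Finset.range n, a i • w (ψ (q i))‖ -
        ‖∑ i ∈ Finset.range n, a i • w (ψ (q' i))‖| ≤ ε := by
    intro w hw hmem
    set v : Fin n → ℕ := fun i => ψ (q (i:ℕ)) with hv
    set v' : Fin n → ℕ := fun i => ψ (q' (i:ℕ)) with hv'
    have hvsm : StrictMono v := fun i j hij => hψ (hq (by exact_mod_cast hij))
    have hv'sm : StrictMono v' := fun i j hij => hψ (hq' (by exact_mod_cast hij))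
    have hmid := chain_stab n (mkg n w z) hmem v v' hvsm hv'sm
      (hmemq q hq hq0) (hmemq q' hq' hq'0)
    have h1 := approx w hw q
    have h2 := approx w hw q'
    calc |‖∑ i ∈ Finset.range n, a i • w (ψ (q i))‖ -
          ‖∑ i ∈ Finset.range n, a i • w (ψ (q' i))‖|
        ≤ |‖∑ i ∈ Finset.range n, a i • w (ψ (q i))‖ - mkg n w z v| +
          |mkg n w z v - mkg n w z v'| +
          |mkg n w z v' - ‖∑ i ∈ Finset.range n, a i • w (ψ (q' i))‖| := by
          have := abs_sub_le (‖∑ i ∈ Finset.range n, a i • w (ψ (q i))‖)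
            (mkg n w z v') (‖∑ i ∈ Finset.range n, a i • w (ψ (q' i))‖)
          have t2 := abs_sub_le (‖∑ i ∈ Finset.range n, a i • w (ψ (q i))‖)
            (mkg n w z v) (mkg n w z v')
          linarith
      _ ≤ ε/3 + ε/3 + ε/3 := by
          refine add_le_add (add_le_add h1 hmid) ?_
          rw [abs_sub_comm]
          exact h2
      _ = ε := by ring
  constructor
  · refine main w₁ hB1 ?_
    rw [hgs, List.mem_append]
    exact Or.inl (List.mem_map.2 ⟨z, Finset.mem_toList.2 hzmem, rfl⟩)
  · refine main w₂ hB2 ?_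
    rw [hgs, List.mem_append]
    exact Or.inr (List.mem_map.2 ⟨z, Finset.mem_toList.2 hzmem, rfl⟩)

lemma sum_grid {M : Type*} [AddCommMonoid M] (m n : ℕ) (f : ℕ → M) :
    ∑ t ∈ Finset.range (m*n), f t
      = ∑ j ∈ Finset.range m, ∑ i ∈ Finset.range n, f (j*n + i) := by
  induction m with
  | zero => simp
  | succ m ih =>
    have h1 : (m+1)*n = m*n + n := by ring
    rw [h1, Finset.range_eq_Ico,
      ← Finset.sum_Ico_consecutive f (Nat.zero_le (m*n)) (Nat.le_add_right _ n),
      ← Finset.range_eq_Ico, ih, Finset.sum_range_succ]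
    congr 1
    rw [Finset.sum_Ico_eq_sum_range]
    simp

lemma grid_div_mod {n : ℕ} (hn : 0 < n) (j i : ℕ) (hi : i < n) :
    (j*n + i)/n = j ∧ (j*n + i) % n = i := by
  constructor
  · rw [mul_comm, Nat.mul_add_div hn, Nat.div_eq_of_lt hi, add_zero]
  · rw [mul_comm, Nat.mul_add_mod, Nat.mod_eq_of_lt hi]


end SubAdmits

open SubAdmits in
/-- If `(x_k)` admits an `ℓ₁` spreading model and `(y_k)` does not, then
`(x_k − y_k)` admits an `ℓ₁` spreading model. -/
theorem sub_admits_l1_spreading_model (x y : ℕ → X)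
    (hx : IsBasicSeq x) (hy : IsBasicSeq y)
    (h1 : AdmitsL1SM x) (h2 : ¬ AdmitsL1SM y) :
    AdmitsL1SM (fun k => x k - y k) := by
  classical
  by_contra h3
  obtain ⟨φ₀, hφ₀, c, hc, hgen⟩ := h1
  obtain ⟨_, Cx, hCx1, hCx⟩ := hx
  obtain ⟨_, Cy, hCy1, hCy⟩ := hy
  have hy0 : ¬ AdmitsL1SM (fun k => y (φ₀ k)) := not_admits_comp hφ₀ h2
  -- step 1: bounded subsequence for y ∘ φ₀
  have hYB : ∃ M : ℝ, 0 ≤ M ∧ {k : ℕ | ‖y (φ₀ k)‖ ≤ M}.Infinite := by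
    by_contra hYB
    push_neg at hYB
    have hfin : ∀ M : ℝ, 0 ≤ M → {k : ℕ | ‖y (φ₀ k)‖ ≤ M}.Finite := by
      intro M hM
      by_contra hf
      exact hf (hYB M hM)
    set S : ℕ → Set ℕ := fun k => {t : ℕ | 4*Cy*(0+1) * 2^k < ‖y (φ₀ t)‖} with hSdef
    have hSinf : ∀ k, (S k).Infinite := by
      intro k
      have h4 : {t : ℕ | ‖y (φ₀ t)‖ ≤ 4*Cy*(0+1) * 2^k}.Finite :=
        hfin _ (by positivity)
      have : (S k) = {t : ℕ | ‖y (φ₀ t)‖ ≤ 4*Cy*(0+1) * 2^k}ᶜ := by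
        ext t; simp [hSdef, not_le]
      rw [this]
      exact Set.Finite.infinite_compl h4
    obtain ⟨φg, hφg, hφgmem⟩ := exists_strictMono_into S hSinf
    have hgrow : ∀ k, 4*Cy*(0+1) * 2^k ≤ ‖y ((fun t => φ₀ (φg t)) k)‖ :=
      fun k => le_of_lt (hφgmem k)
    have hgengrow := growth (v := fun _ => (0:X)) hCy1 le_rfl hCy
      (fun k => by simp) (hφ₀.comp hφg) hgrow
    have : GeneratesL1SM (fun k => (fun j => y (φ₀ j)) (φg k)) := by
      obtain ⟨c', hc', hgen'⟩ := hgengrow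
      exact ⟨c', hc', fun n k hk hk0 a => by simpa using hgen' n k hk hk0 a⟩
    exact hy0 ⟨φg, hφg, this⟩
  obtain ⟨M₀, hM₀0, hM₀⟩ := hYB
  obtain ⟨φ₁, hφ₁, hφ₁mem⟩ := exists_strictMono_into (fun _ => {k : ℕ | ‖y (φ₀ k)‖ ≤ M₀})
    (fun _ => hM₀)
  -- step 2: bounded subsequence for x ∘ φ₀ ∘ φ₁, else done by growth
  have hXB : ∃ M : ℝ, 0 ≤ M ∧ {k : ℕ | ‖x (φ₀ (φ₁ k))‖ ≤ M}.Infinite := by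
    by_contra hXB
    push_neg at hXB
    have hfin : ∀ M : ℝ, 0 ≤ M → {k : ℕ | ‖x (φ₀ (φ₁ k))‖ ≤ M}.Finite := by
      intro M hM
      by_contra hf
      exact hf (hXB M hM)
    set S : ℕ → Set ℕ := fun k => {t : ℕ | 4*Cx*(M₀+1) * 2^k < ‖x (φ₀ (φ₁ t))‖} with hSdef
    have hSinf : ∀ k, (S k).Infinite := by
      intro k
      have h4 : {t : ℕ | ‖x (φ₀ (φ₁ t))‖ ≤ 4*Cx*(M₀+1) * 2^k}.Finite :=
        hfin _ (by positivity)
      have : (S k) = {t : ℕ | ‖x (φ₀ (φ₁ t))‖ ≤ 4*Cx*(M₀+1) * 2^k}ᶜ := by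
        ext t; simp [hSdef, not_le]
      rw [this]
      exact Set.Finite.infinite_compl h4
    obtain ⟨φg, hφg, hφgmem⟩ := exists_strictMono_into S hSinf
    have hΦg : StrictMono (fun t => φ₀ (φ₁ (φg t))) := hφ₀.comp (hφ₁.comp hφg)
    have hgrow : ∀ k, 4*Cx*(M₀+1) * 2^k ≤ ‖x ((fun t => φ₀ (φ₁ (φg t))) k)‖ :=
      fun k => le_of_lt (hφgmem k)
    have hvb : ∀ k, ‖y ((fun t => φ₀ (φ₁ (φg t))) k)‖ ≤ M₀ :=
      fun k => hφ₁mem (φg k)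
    have hgengrow := growth (v := y) hCx1 hM₀0 hCx hvb hΦg hgrow
    exact h3 ⟨(fun t => φ₀ (φ₁ (φg t))), hΦg, hgengrow⟩
  obtain ⟨M₁, hM₁0, hM₁⟩ := hXB
  obtain ⟨φ₂, hφ₂, hφ₂mem⟩ := exists_strictMono_into (fun _ => {k : ℕ | ‖x (φ₀ (φ₁ k))‖ ≤ M₁})
    (fun _ => hM₁)
  -- now everything is bounded along Φ
  set Φ : ℕ → ℕ := fun k => φ₀ (φ₁ (φ₂ k)) with hΦdef
  have hΦ : StrictMono Φ := hφ₀.comp (hφ₁.comp hφ₂)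
  set Y : ℕ → X := fun k => y (Φ k) with hYdef
  set Z : ℕ → X := fun k => x (Φ k) - y (Φ k) with hZdef
  set B : ℝ := M₀ + M₁ with hBdef
  have hBY : ∀ k, ‖Y k‖ ≤ B := by
    intro k
    have := hφ₁mem (φ₂ k)
    simp only [Set.mem_setOf_eq] at this
    rw [hYdef]
    simp only [hΦdef]
    linarith
  have hBZ : ∀ k, ‖Z k‖ ≤ B := by
    intro k
    have h1 := hφ₁mem (φ₂ k)
    have h2 := hφ₂mem k
    simp only [Set.mem_setOf_eq] at h1 h2
    rw [hZdef]
    simp only [hΦdef]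
    calc ‖x (φ₀ (φ₁ (φ₂ k))) - y (φ₀ (φ₁ (φ₂ k)))‖
        ≤ ‖x (φ₀ (φ₁ (φ₂ k)))‖ + ‖y (φ₀ (φ₁ (φ₂ k)))‖ := norm_sub_le _ _
      _ ≤ B := by rw [hBdef]; linarith
  have hB0 : 0 ≤ B := by rw [hBdef]; linarith
  -- stabilize
  obtain ⟨ψ, hψ, hstab⟩ := exists_stab Y Z B hB0 hBY hBZ (c/8) (by positivity)
  -- non-generation along ψ
  have hnY : ¬ GeneratesL1SM (fun k => Y (ψ k)) := by
    intro hg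
    have hyΦ : ¬ AdmitsL1SM Y :=
      not_admits_comp (x := fun k => y (φ₀ k)) (φ := fun k => φ₁ (φ₂ k))
        (hφ₁.comp hφ₂) hy0
    exact hyΦ ⟨ψ, hψ, hg⟩
  have hnZ : ¬ GeneratesL1SM (fun k => Z (ψ k)) := by
    intro hg
    have hzΦ : ¬ AdmitsL1SM Z := not_admits_comp hΦ h3
    exact hzΦ ⟨ψ, hψ, hg⟩
  obtain ⟨m, kd, d, hkd, hkd0, hd1, hdsmall⟩ :=
    small_combo hnY (show (0:ℝ) < c/8 by positivity)
  obtain ⟨n, ka, a, hka, hka0, ha1, hasmall⟩ :=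
    small_combo hnZ (show (0:ℝ) < c/8 by positivity)
  have hdsmall' : ‖∑ j ∈ Finset.range m, d j • Y (ψ (kd j))‖ < c/8 := hdsmall
  have hasmall' : ‖∑ i ∈ Finset.range n, a i • Z (ψ (ka i))‖ < c/8 := hasmall
  have hm1 : 0 < m := by
    rcases Nat.eq_zero_or_pos m with h | h
    · exfalso; rw [h] at hd1; simp at hd1
    · exact h
  have hn1 : 0 < n := by
    rcases Nat.eq_zero_or_pos n with h | h
    · exfalso; rw [h] at ha1; simp at ha1
    · exact h
  -- stabilization transfer
  have hYsmall : ∀ q' : ℕ → ℕ, StrictMono q' → m ≤ q' 0 →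
      ‖∑ j ∈ Finset.range m, d j • Y (ψ (q' j))‖ ≤ c/4 := by
    intro q' hq' hq'0
    have h5 := (hstab m d (le_of_eq hd1) q' kd hq' hkd hq'0 hkd0).1
    have h6 := abs_sub_le_iff.1 h5
    linarith [h6.1]
  have hZsmall : ∀ q' : ℕ → ℕ, StrictMono q' → n ≤ q' 0 →
      ‖∑ i ∈ Finset.range n, a i • Z (ψ (q' i))‖ ≤ c/4 := by
    intro q' hq' hq'0
    have h5 := (hstab n a (le_of_eq ha1) q' ka hq' hka hq'0 hka0).2
    have h6 := abs_sub_le_iff.1 h5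
    linarith [h6.1]
  -- the grid
  set T0 : ℕ := m*n + m + n with hT0
  set Kmap : ℕ → ℕ := fun t => T0 + t with hKmapdef
  have hKmapSM : StrictMono Kmap := fun s t hst => Nat.add_lt_add_left hst T0
  set b : ℕ → ℝ := fun t => d (t/n) * a (t % n) with hbdef
  have hbval : ∀ j i, i < n → b (j*n + i) = d j * a i := by
    intro j i hi
    rw [hbdef]
    simp only
    rw [mul_comm j n, Nat.mul_add_div hn1, Nat.div_eq_of_lt hi, add_zero,
      Nat.mul_add_mod, Nat.mod_eq_of_lt hi]
  have hbsum : ∑ t ∈ Finset.range (m*n), |b t| = 1 := by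
    rw [sum_grid m n (fun t => |b t|)]
    have : ∀ j ∈ Finset.range m, ∑ i ∈ Finset.range n, |b (j*n + i)|
        = |d j| * ∑ i ∈ Finset.range n, |a i| := by
      intro j _
      rw [Finset.mul_sum]
      refine Finset.sum_congr rfl fun i hi => ?_
      rw [hbval j i (Finset.mem_range.1 hi), abs_mul]
    rw [Finset.sum_congr rfl this]
    simp only [ha1, mul_one]
    exact hd1
  -- x lower bound along the grid
  have hgen2 := gens_comp (x := fun k => x (φ₀ k)) (φ := fun k => φ₁ (φ₂ (ψ k)))
    (hφ₁.comp (hφ₂.comp hψ)) hc hgen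
  set SX := ∑ t ∈ Finset.range (m*n), b t • x (Φ (ψ (Kmap t))) with hSXdef
  set SY := ∑ t ∈ Finset.range (m*n), b t • Y (ψ (Kmap t)) with hSYdef
  set SZ := ∑ t ∈ Finset.range (m*n), b t • Z (ψ (Kmap t)) with hSZdef
  have hSXlow : c * 1 ≤ ‖SX‖ := by
    have h7 : m*n ≤ Kmap 0 := by
      have h7b : Kmap 0 = T0 := rfl
      rw [h7b, hT0]
      exact le_trans (Nat.le_add_right _ m) (Nat.le_add_right _ n)
    have := hgen2 (m*n) Kmap hKmapSM h7 b
    rw [hbsum] at this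
    exact this
  have hsplit : SX = SY + SZ := by
    rw [hSXdef, hSYdef, hSZdef, ← Finset.sum_add_distrib]
    refine Finset.sum_congr rfl fun t _ => ?_
    rw [← smul_add]
    congr 1
    simp only [hYdef, hZdef]
    abel
  -- Z part small, by rows
  have hSZle : ‖SZ‖ ≤ c/4 := by
    have e1 : SZ = ∑ j ∈ Finset.range m,
        d j • ∑ i ∈ Finset.range n, a i • Z (ψ (T0 + j*n + i)) := by
      rw [hSZdef, sum_grid m n (fun t => b t • Z (ψ (Kmap t)))]
      refine Finset.sum_congr rfl fun j _ => ?_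
      rw [Finset.smul_sum]
      refine Finset.sum_congr rfl fun i hi => ?_
      rw [hbval j i (Finset.mem_range.1 hi), mul_smul]
      rw [show Kmap (j*n + i) = T0 + j*n + i from (Nat.add_assoc T0 (j*n) i).symm]
    rw [e1]
    calc ‖∑ j ∈ Finset.range m,
        d j • ∑ i ∈ Finset.range n, a i • Z (ψ (T0 + j*n + i))‖
        ≤ ∑ j ∈ Finset.range m,
          ‖d j • ∑ i ∈ Finset.range n, a i • Z (ψ (T0 + j*n + i))‖ := norm_sum_le _ _
      _ ≤ ∑ j ∈ Finset.range m, |d j| * (c/4) := by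
          refine Finset.sum_le_sum fun j _ => ?_
          rw [norm_smul, Real.norm_eq_abs]
          refine mul_le_mul_of_nonneg_left ?_ (abs_nonneg _)
          refine hZsmall (fun i => T0 + j*n + i)
            (fun s t hst => Nat.add_lt_add_left hst _) ?_
          have h9 : n ≤ T0 := by
            rw [hT0]
            exact Nat.le_add_left n (m*n+m)
          exact le_trans h9 (Nat.le_add_right T0 (j*n))
      _ = c/4 := by rw [← Finset.sum_mul, hd1, one_mul]
  -- Y part small, by columns
  have hSYle : ‖SY‖ ≤ c/4 := by
    have e1 : SY = ∑ i ∈ Finset.range n,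
        a i • ∑ j ∈ Finset.range m, d j • Y (ψ (T0 + j*n + i)) := by
      rw [hSYdef, sum_grid m n (fun t => b t • Y (ψ (Kmap t))), Finset.sum_comm]
      refine Finset.sum_congr rfl fun i hi => ?_
      rw [Finset.smul_sum]
      refine Finset.sum_congr rfl fun j _ => ?_
      rw [hbval j i (Finset.mem_range.1 hi), mul_comm (d j) (a i), mul_smul]
      rw [show Kmap (j*n + i) = T0 + j*n + i from (Nat.add_assoc T0 (j*n) i).symm]
    rw [e1]
    calc ‖∑ i ∈ Finset.range n,
        a i • ∑ j ∈ Finset.range m, d j • Y (ψ (T0 + j*n + i))‖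
        ≤ ∑ i ∈ Finset.range n,
          ‖a i • ∑ j ∈ Finset.range m, d j • Y (ψ (T0 + j*n + i))‖ := norm_sum_le _ _
      _ ≤ ∑ i ∈ Finset.range n, |a i| * (c/4) := by
          refine Finset.sum_le_sum fun i _ => ?_
          rw [norm_smul, Real.norm_eq_abs]
          refine mul_le_mul_of_nonneg_left ?_ (abs_nonneg _)
          refine hYsmall (fun j => T0 + j*n + i) ?_ ?_
          · intro s t hst
            have h8 : s * n < t * n := mul_lt_mul_of_pos_right hst hn1
            exact Nat.add_lt_add_right (Nat.add_lt_add_left h8 T0) i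
          · have h9 : m ≤ T0 := by
              rw [hT0]
              exact le_trans (Nat.le_add_left m (m*n)) (Nat.le_add_right _ n)
            simp only [Nat.zero_mul]
            exact le_trans h9 (le_trans (Nat.le_add_right T0 0) (Nat.le_add_right _ i))
      _ = c/4 := by rw [← Finset.sum_mul, ha1, one_mul]
  have hfinal : c ≤ c/2 := by
    calc c = c * 1 := (mul_one c).symm
      _ ≤ ‖SX‖ := hSXlow
      _ = ‖SY + SZ‖ := by rw [hsplit]
      _ ≤ ‖SY‖ + ‖SZ‖ := norm_add_le _ _
      _ ≤ c/4 + c/4 := add_le_add hSYle hSZle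
      _ = c/2 := by ring
  linarith
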